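/- Let C be a k-dimensional linear code of length n over a field F whose minimum Hamming distance is n−k+1 (an [n,k] MDS code) with 1 ≤ k ≤ n−1, and let S be a nonempty proper subset of the n coordinates. Then C ⋆ 1_S is not contained in C; that is, there exists a codeword c ∈ C such that the vector obtained from c by setting to zero all coordinates outside S is not a codeword of C. -/

import Mathlib

lemma singleton_bound (F : Type*) [Field F] (n d : ℕ) (hd : 1 ≤ d)
    (D : Submodule F (Fin n → F)) (T : Finset (Fin n))
    (hsupp : ∀ c ∈ D, Function.support c ⊆ ↑T)
    (hw : ∀ c ∈ D, c ≠ 0 → d ≤ (Function.support c).ncard)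
    (hne : D ≠ ⊥) :
    Module.finrank F D + d ≤ T.card + 1 := by
  obtain ⟨c0, hc0D, hc0⟩ := Submodule.exists_mem_ne_zero_of_ne_bot hne
  have hdT : d ≤ T.card := by
    calc d ≤ (Function.support c0).ncard := hw c0 hc0D hc0
    _ ≤ (↑T : Set (Fin n)).ncard := Set.ncard_le_ncard (hsupp c0 hc0D) T.finite_toSet
    _ = T.card := Set.ncard_coe_finset T
  obtain ⟨T', hT'sub, hT'card⟩ := Finset.exists_subset_card_eq
    (show T.card + 1 - d ≤ T.card by omega)
  let f : D →ₗ[F] (↥T' → F) :=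
  { toFun := fun c i => (c : Fin n → F) i,
    map_add' := fun x y => rfl,
    map_smul' := fun a x => rfl }
  have hinj : Function.Injective f := by
    rw [injective_iff_map_eq_zero]
    intro c hc
    by_contra hcne
    have hcne' : (c : Fin n → F) ≠ 0 := fun h => hcne (Subtype.ext h)
    have hsub : Function.support (c : Fin n → F) ⊆ ↑T \ ↑T' := by
      intro i hi
      refine ⟨hsupp _ c.2 hi, fun hiT' => ?_⟩
      have := congrFun hc ⟨i, hiT'⟩
      exact hi this
    have : (Function.support (c : Fin n → F)).ncard ≤ (T \ T').card := by
      calc (Function.support (c : Fin n → F)).ncard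
          ≤ (↑T \ ↑T' : Set (Fin n)).ncard :=
            Set.ncard_le_ncard hsub ((T.finite_toSet).diff)
        _ = (T \ T').card := by rw [← Finset.coe_sdiff, Set.ncard_coe_finset]
    have hcard : (T \ T').card = d - 1 := by
      rw [Finset.card_sdiff_of_subset hT'sub]; omega
    have := hw _ c.2 hcne'
    omega
  have hle : Module.finrank F D ≤ Module.finrank F (↥T' → F) :=
    LinearMap.finrank_le_finrank_of_injective hinj
  have : Module.finrank F (↥T' → F) = T'.card := by
    rw [Module.finrank_pi, Fintype.card_coe]
  omega

/-- If `C` is a `k`-dimensional MDS code of length `n` (every nonzero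
codeword has Hamming weight at least `n − k + 1`) with `1 ≤ k ≤ n − 1`, and `S` is a
nonempty proper subset of the coordinates, then `C ⋆ 1_S ⊄ C`: some codeword `c ∈ C`,
with all coordinates outside `S` set to zero, is no longer a codeword of `C`. -/
theorem stmt_8 (F : Type*) [Field F] (n k : ℕ) (hk1 : 1 ≤ k) (hk2 : k ≤ n - 1)
    (C : Submodule F (Fin n → F)) (hdim : Module.finrank F C = k)
    (hMDS : ∀ c ∈ C, c ≠ 0 → n - k + 1 ≤ (Function.support c).ncard)
    (S : Finset (Fin n)) (hS : S.Nonempty) (hSne : S ≠ Finset.univ) :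
    ∃ c ∈ C, (fun i => if i ∈ S then c i else 0) ∉ C := by
  by_contra hcon
  push_neg at hcon
  have hn : 1 ≤ n := by
    obtain ⟨i, _⟩ := hS
    exact Nat.pos_of_ne_zero (fun h => by subst h; exact i.elim0)
  have hkn : k < n := by omega
  let π : C →ₗ[F] (Fin n → F) :=
  { toFun := fun c i => if i ∈ S then (c : Fin n → F) i else 0,
    map_add' := fun x y => by funext i; by_cases h : i ∈ S <;> simp [h],
    map_smul' := fun a x => by funext i; by_cases h : i ∈ S <;> simp [h] }
  set D₁ : Submodule F (Fin n → F) := LinearMap.range π with hD₁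
  set D₂ : Submodule F (Fin n → F) := (LinearMap.ker π).map C.subtype with hD₂
  have hsum : Module.finrank F D₁ + Module.finrank F D₂ = k := by
    rw [hD₂, Submodule.finrank_map_subtype_eq,
      LinearMap.finrank_range_add_finrank_ker π, hdim]
  -- properties of D₁
  have hD₁C : ∀ v ∈ D₁, v ∈ C := by
    rintro v ⟨c, rfl⟩
    exact hcon c c.2
  have hD₁supp : ∀ v ∈ D₁, Function.support v ⊆ ↑S := by
    rintro v ⟨c, rfl⟩ i hi
    simp only [Function.mem_support, π, LinearMap.coe_mk, AddHom.coe_mk,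
      ne_eq, ite_eq_right_iff, not_forall] at hi
    exact hi.1
  have hD₁w : ∀ v ∈ D₁, v ≠ 0 → n - k + 1 ≤ (Function.support v).ncard :=
    fun v hv hvne => hMDS v (hD₁C v hv) hvne
  -- properties of D₂
  have hD₂C : ∀ v ∈ D₂, v ∈ C := by
    rintro v ⟨c, hc, rfl⟩
    exact c.2
  have hD₂supp : ∀ v ∈ D₂, Function.support v ⊆ ↑Sᶜ := by
    rintro v ⟨c, hc, rfl⟩ i hi
    have hc' : π c = 0 := hc
    simp only [Finset.coe_compl, Set.mem_compl_iff, Finset.mem_coe]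
    intro hiS
    have h2 := congrFun hc' i
    simp only [π, LinearMap.coe_mk, AddHom.coe_mk, hiS, if_true, Pi.zero_apply] at h2
    exact hi h2
  have hD₂w : ∀ v ∈ D₂, v ≠ 0 → n - k + 1 ≤ (Function.support v).ncard :=
    fun v hv hvne => hMDS v (hD₂C v hv) hvne
  have hScard : S.card ≤ n := le_trans (Finset.card_le_univ S) (by simp)
  have hScard1 : 1 ≤ S.card := Finset.card_pos.mpr hS
  have hScardlt : S.card < n := by
    rcases lt_or_eq_of_le (Finset.card_le_univ S) with h | h
    · simpa using h
    · exact absurd (Finset.eq_univ_of_card S (by simpa using h)) hSne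
  have hSccard : Sᶜ.card = n - S.card := by simp [Finset.card_compl]
  have hd1 : 1 ≤ n - k + 1 := by omega
  by_cases h1 : D₁ = ⊥
  · by_cases h2 : D₂ = ⊥
    · rw [h1, h2] at hsum
      simp [finrank_bot] at hsum
      omega
    · have := singleton_bound F n (n - k + 1) hd1 D₂ Sᶜ hD₂supp hD₂w h2
      rw [h1] at hsum
      simp only [finrank_bot, zero_add] at hsum
      omega
  · by_cases h2 : D₂ = ⊥
    · have := singleton_bound F n (n - k + 1) hd1 D₁ S hD₁supp hD₁w h1
      rw [h2] at hsum
      simp only [finrank_bot, add_zero] at hsum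
      omega
    · have b1 := singleton_bound F n (n - k + 1) hd1 D₁ S hD₁supp hD₁w h1
      have b2 := singleton_bound F n (n - k + 1) hd1 D₂ Sᶜ hD₂supp hD₂w h2
      omega
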